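/- In the setting of an ω^op-continuous H : Set → Set with ω-cocontinuous lifting H̃ to Alg(M) and M0 = 1: the composites f ∘ i_n : HⁿM0 → L satisfy p_n ∘ f ∘ i_n = id, hence each f ∘ i_n is a (split) monomorphism; moreover, if the monad M is finitary, then the canonical M-algebra map f : I → L from the initial H̃-algebra to the final coalgebra is a monomorphism, so I is isomorphic to a subalgebra of L. -/

import Mathlib

open CategoryTheory

universe u

namespace OnCoalgebrasOverAlgebras

/-- A distributive law `λ : MH ⟶ HM` of a monad `M` on `Set` over an endofunctor `H`,
equivalently (the data of) a lifting `H̃` of `H` to the Eilenberg–Moore category of `M`: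
it satisfies `λ ∘ u_H = Hu` and `λ ∘ m_H = Hm ∘ λ_M ∘ Mλ`. -/
structure DistLaw (M : Monad (Type u)) (H : Type u ⥤ Type u) where
  app : ∀ X : Type u, M.toFunctor.obj (H.obj X) → H.obj (M.toFunctor.obj X)
  naturality : ∀ {X Y : Type u} (f : X → Y) (z : M.toFunctor.obj (H.obj X)),
    app Y (M.toFunctor.map (H.map (TypeCat.ofHom f)) z)
      = H.map (M.toFunctor.map (TypeCat.ofHom f)) (app X z)
  unit : ∀ (X : Type u) (z : H.obj X),
    app X (M.η.app (H.obj X) z) = H.map (M.η.app X) z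
  mul : ∀ (X : Type u) (z : M.toFunctor.obj (M.toFunctor.obj (H.obj X))),
    app X (M.μ.app (H.obj X) z)
      = H.map (M.μ.app X) (app (M.toFunctor.obj X) (M.toFunctor.map (TypeCat.ofHom (app X)) z))

/-- The terminal sequence `1, H1, H²1, …` of an endofunctor `H` on `Set`. -/
def TObj (H : Type u ⥤ Type u) : ℕ → Type u
  | 0 => PUnit
  | n + 1 => H.obj (TObj H n)

/-- The connecting maps `Hⁿt : H^{n+1}1 → Hⁿ1` of the terminal sequence,
where `t : H1 → 1` is the unique map. -/
def TMap (H : Type u ⥤ Type u) : ∀ n : ℕ, TObj H (n + 1) → TObj H n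
  | 0 => fun _ => PUnit.unit
  | n + 1 => H.map (TypeCat.ofHom (TMap H n))

/-- The limit `L = {(x_n) | Hⁿt (x_{n+1}) = x_n}` of the terminal sequence of `H`. -/
def L (H : Type u ⥤ Type u) : Type u :=
  { x : ∀ n, TObj H n // ∀ n, TMap H n (x (n + 1)) = x n }

/-- The limit projections `p_n : L → Hⁿ1`. -/
def pr (H : Type u ⥤ Type u) (n : ℕ) : L H → TObj H n := fun x => x.1 n

/-- The `M`-algebra structures `a_n : MHⁿ1 → Hⁿ1` on the terminal sequence,
defined by `a₀ : M1 → 1` the unique map and `a_{n+1} = H a_n ∘ λ_{Hⁿ1}`. -/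
def aStr {M : Monad (Type u)} {H : Type u ⥤ Type u} (l : DistLaw M H) :
    ∀ n : ℕ, M.toFunctor.obj (TObj H n) → TObj H n
  | 0 => fun _ => PUnit.unit
  | n + 1 => fun z => H.map (TypeCat.ofHom (aStr l n)) (l.app (TObj H n) z)

/-- The cone `α_n : C → Hⁿ1` over the terminal sequence induced by an `H`-coalgebra
structure `c : C → HC`; `α₀` is the unique map and `α_{n+1} = Hα_n ∘ c`. -/
def alphaCone (H : Type u ⥤ Type u) {C : Type u} (c : C → H.obj C) :
    ∀ n : ℕ, C → TObj H n
  | 0 => fun _ => PUnit.unit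
  | n + 1 => fun z => H.map (TypeCat.ofHom (alphaCone H c n)) (c z)

open Classical in
/-- The canonical ultrametric on the limit `L` of the terminal sequence:
`d(x,y) = 2^{-n}` with `n` least such that `p_n x ≠ p_n y`, and `d(x,y) = 0` if `x = y`. -/
noncomputable def dL (H : Type u ⥤ Type u) (x y : L H) : ℝ :=
  if x = y then 0 else (2⁻¹ : ℝ) ^ sInf { n : ℕ | x.1 n ≠ y.1 n }

/-- The maps `Hⁿ! : Hⁿ1 → H^{n+1}1` generated by a map `! : 1 → H1`
(under `M0 = 1`, the unique algebra map out of the initial algebra `M0`). -/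
def Emb (H : Type u ⥤ Type u) (e : TObj H 0 → TObj H 1) :
    ∀ n : ℕ, TObj H n → TObj H (n + 1)
  | 0 => e
  | n + 1 => H.map (TypeCat.ofHom (Emb H e n))

private lemma mapmap (F : Type u ⥤ Type u) {X Y Z : Type u} (f : X → Y) (g : Y → Z)
    (x : F.obj X) : F.map (TypeCat.ofHom g) (F.map (TypeCat.ofHom f) x)
      = F.map (TypeCat.ofHom (fun w => g (f w))) x :=
  (Functor.map_comp_apply F (TypeCat.ofHom f) (TypeCat.ofHom g) x).symm

/-- The lifting `H̃` of `H` to the Eilenberg–Moore category `Alg(M)` determined by a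
distributive law `λ : MH ⟶ HM`: it sends an algebra `(X, x)` to `(HX, Hx ∘ λ_X)`
and satisfies `U^M ∘ H̃ = H ∘ U^M`. -/
def liftF (M : Monad (Type u)) (H : Type u ⥤ Type u) (l : DistLaw M H) :
    M.Algebra ⥤ M.Algebra where
  obj A :=
    { A := H.obj A.A
      a := TypeCat.ofHom fun z => H.map A.a (l.app A.A z)
      unit := by
        ext z
        change H.map A.a (l.app A.A (M.η.app (H.obj A.A) z)) = z
        rw [l.unit A.A z, ← Functor.map_comp_apply, A.unit]
        simp
      assoc := by
        ext z
        change H.map A.a (l.app A.A (M.μ.app (H.obj A.A) z))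
          = H.map A.a (l.app A.A (M.toFunctor.map
              (TypeCat.ofHom fun w => H.map A.a (l.app A.A w)) z))
        rw [← mapmap M.toFunctor (l.app A.A) (H.map A.a) z]
        erw [l.naturality A.a]
        rw [l.mul A.A z]
        erw [← Functor.map_comp_apply H, ← Functor.map_comp_apply H, A.assoc]
        rfl }
  map := fun {A B} f =>
    { f := H.map f.f
      h := by
        ext z
        change H.map B.a (l.app B.A (M.toFunctor.map (H.map f.f) z))
          = H.map f.f (H.map A.a (l.app A.A z))
        erw [l.naturality f.f z]
        erw [← Functor.map_comp_apply H, ← Functor.map_comp_apply H, f.h] }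
  map_id A := by
    apply Monad.Algebra.Hom.ext
    show H.map (𝟙 A.A) = 𝟙 (H.obj A.A)
    simp
  map_comp f g := by
    apply Monad.Algebra.Hom.ext
    show H.map (f.f ≫ g.f) = _
    rw [H.map_comp]
    rfl

/-- In the setting of Theorem 1 (`ω^op`-continuous `H`,
`ω`-cocontinuous lifting `H̃`, `M0 = 1`): the composites `f ∘ i_n : HⁿM0 → L` satisfy
`p_n ∘ f ∘ i_n = id`, hence each `f ∘ i_n` is a (split) monomorphism; moreover, if the
monad `M` is finitary then the canonical `M`-algebra map `f : I → L` from the initial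
`H̃`-algebra to the final coalgebra is a monomorphism, so `I` is isomorphic to a
subalgebra of `L`. -/
theorem initial_algebra_subalgebra_of_final_coalgebra
    (M : Monad (Type u)) (H : Type u ⥤ Type u)
    -- `H` is `ω^op`-continuous
    [Limits.PreservesLimitsOfShape ℕᵒᵖ H]
    -- `H` admits a lifting `H̃` to `Alg(M)`, which is `ω`-cocontinuous
    (l : DistLaw M H)
    [Limits.PreservesColimitsOfShape ℕ (liftF M H l)]
    -- `M0 = 1` in `Alg(M)`: the free algebra on the empty set is a singleton
    (h0 : Subsingleton (M.toFunctor.obj PEmpty))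
    (h1 : Nonempty (M.toFunctor.obj PEmpty))
    -- the final coalgebra structure `ξ : L ≅ HL` obtained from the limit
    (ξ : L H → H.obj (L H)) (hbij : Function.Bijective ξ)
    (hξ : ∀ (n : ℕ) (x : L H), pr H (n + 1) x = H.map (TypeCat.ofHom (pr H n)) (ξ x))
    -- the `M`-algebra structure `γ : ML → L`, the unique coalgebra map from `(ML, λ_L ∘ Mξ)`
    (γ : M.toFunctor.obj (L H) → L H)
    (hγ : ∀ z, ξ (γ z) = H.map (TypeCat.ofHom γ) (l.app (L H) (M.toFunctor.map (TypeCat.ofHom ξ) z)))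
    -- the unique algebra map `! : 1 = M0 → HM0 = H1`
    (e : TObj H 0 → TObj H 1)
    (he : ∀ z, e (aStr l 0 z) = aStr l 1 (M.toFunctor.map (TypeCat.ofHom e) z))
    -- the initial `H̃`-algebra `I`: an `M`-algebra `(I, ζ)` …
    (I : Type u) (ζ : M.toFunctor.obj I → I)
    (hζu : ∀ z, ζ (M.η.app I z) = z)
    (hζm : ∀ z, ζ (M.μ.app I z) = ζ (M.toFunctor.map (TypeCat.ofHom ζ) z))
    -- … with a cocone `i_n : HⁿM0 = Hⁿ1 → I` of `M`-algebra morphisms …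
    (i : ∀ n : ℕ, TObj H n → I)
    (hialg : ∀ (n : ℕ) (z : M.toFunctor.obj (TObj H n)),
      i n (aStr l n z) = ζ (M.toFunctor.map (TypeCat.ofHom (i n)) z))
    (hicoc : ∀ (n : ℕ) (x : TObj H n), i (n + 1) (Emb H e n x) = i n x)
    -- … which is colimiting in `Alg(M)` for the initial sequence `M0 → HM0 → H²M0 → …`
    (hcolim : ∀ (B : Type u) (b : M.toFunctor.obj B → B),
      (∀ z, b (M.η.app B z) = z) →
      (∀ z, b (M.μ.app B z) = b (M.toFunctor.map (TypeCat.ofHom b) z)) →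
      ∀ g : ∀ n : ℕ, TObj H n → B,
        (∀ (n : ℕ) (z : M.toFunctor.obj (TObj H n)),
          g n (aStr l n z) = b (M.toFunctor.map (TypeCat.ofHom (g n)) z)) →
        (∀ (n : ℕ) (x : TObj H n), g (n + 1) (Emb H e n x) = g n x) →
        ∃! h : I → B,
          (∀ z, h (ζ z) = b (M.toFunctor.map (TypeCat.ofHom h) z)) ∧ ∀ (n : ℕ) (x : TObj H n), h (i n x) = g n x)
    -- the canonical `M`-algebra map `f : I → L` with `p_n ∘ f ∘ i_n = Hⁿs = id`
    (f : I → L H)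
    (hfalg : ∀ z, f (ζ z) = γ (M.toFunctor.map (TypeCat.ofHom f) z))
    (hfi : ∀ (n : ℕ) (x : TObj H n), pr H n (f (i n x)) = x)
    -- `M` is finitary
    [Limits.PreservesFilteredColimits M.toFunctor] :
    -- `p_n ∘ f ∘ i_n = id` …
    (∀ (n : ℕ) (x : TObj H n), pr H n (f (i n x)) = x) ∧
    -- … hence each `f ∘ i_n` is a split monomorphism …
    (∀ n : ℕ, ∃ r : L H → TObj H n, ∀ x : TObj H n, r (f (i n x)) = x) ∧
    -- … and `f` itself is a monomorphism (an injective `M`-algebra map)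
    Function.Injective f := by
  classical
  refine ⟨hfi, fun n => ⟨pr H n, hfi n⟩, ?_⟩
  -- The chain functor `G : ℕ ⥤ Type u` with `G.obj n = Hⁿ1` and connecting maps `Hⁿ!`.
  let G : ℕ ⥤ Type u := Functor.ofSequence (fun n => TypeCat.ofHom (Emb H e n))
  -- The cocone over `G` with apex `I` given by the `i n`.
  let coc : Limits.Cocone G :=
    { pt := I
      ι := NatTrans.ofSequence (F := G) (G := (Functor.const ℕ).obj I)
        (fun n => (TypeCat.ofHom (i n) : G.obj n ⟶ I)) (by
          intro n
          ext x
          show i (n + 1) (G.map (homOfLE (Nat.le_add_right n 1)) x) = i n x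
          have : G.map (homOfLE (Nat.le_add_right n 1)) = TypeCat.ofHom (Emb H e n) :=
            Functor.ofSequence_map_homOfLE_succ _ n
          rw [this]
          exact hicoc n x) }
  let κ : Limits.colimit G → I := Limits.colimit.desc G coc
  have hκ : ∀ (n : ℕ) (x : TObj H n), κ (Limits.colimit.ι G n x) = i n x := by
    intro n x
    exact ConcreteCategory.congr_hom (Limits.colimit.ι_desc coc n) x
  -- The union of the images of the `i n`, as the image of `κ`.
  let S : Set I := Set.range κ
  have memi : ∀ (n : ℕ) (x : TObj H n), i n x ∈ S := by
    intro n x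
    exact ⟨Limits.colimit.ι G n x, hκ n x⟩
  -- `M` is finitary, hence preserves the colimit of the chain `G`.
  have hpres : Limits.PreservesFilteredColimitsOfSize.{0, 0} M.toFunctor :=
    Limits.preservesSmallestFilteredColimits_of_preservesFilteredColimits M.toFunctor
  have hMpres : Limits.PreservesColimitsOfShape ℕ M.toFunctor := inferInstance
  -- every element of `M S` comes from `M (Hⁿ1)` for some `n`
  have claim : ∀ z : M.toFunctor.obj S, ∃ (n : ℕ) (w : M.toFunctor.obj (TObj H n)),
      M.toFunctor.map (TypeCat.ofHom (Subtype.val : S → I)) z = M.toFunctor.map (TypeCat.ofHom (i n)) w := by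
    intro z
    let κ' : Limits.colimit G → S := fun q => ⟨κ q, Set.mem_range_self q⟩
    have hκ'surj : Function.Surjective κ' := by
      rintro ⟨a, q, rfl⟩
      exact ⟨q, rfl⟩
    obtain ⟨s, hs⟩ := hκ'surj.hasRightInverse
    have hz : M.toFunctor.map (TypeCat.ofHom κ') (M.toFunctor.map (TypeCat.ofHom s) z) = z := by
      rw [mapmap]
      rw [show TypeCat.ofHom (fun w => κ' (s w)) = 𝟙 (↥S) from congrArg TypeCat.ofHom (funext hs), M.toFunctor.map_id]
      rfl
    have hcol := Limits.isColimitOfPreserves M.toFunctor (Limits.colimit.isColimit G)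
    obtain ⟨n, y, hy⟩ := Limits.Types.jointly_surjective _ hcol (M.toFunctor.map (TypeCat.ofHom s) z)
    have hy' : M.toFunctor.map (TypeCat.ofHom (fun x : TObj H n => Limits.colimit.ι G n x)) (y : M.toFunctor.obj (TObj H n)) = M.toFunctor.map (TypeCat.ofHom s) z := hy
    refine ⟨n, y, ?_⟩
    rw [← hz, ← hy', mapmap]
    refine (mapmap M.toFunctor _ _ y).trans ?_
    exact congrFun (congrArg (fun φ => ⇑(M.toFunctor.map (TypeCat.ofHom φ))) (funext fun x => hκ n x)) y
  -- the `M`-algebra structure on `S`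
  let bS : M.toFunctor.obj S → S := fun z =>
    ⟨ζ (M.toFunctor.map (TypeCat.ofHom (Subtype.val : S → I)) z), by
      obtain ⟨n, w, hw⟩ := claim z
      rw [hw, ← hialg]
      exact memi n _⟩
  have hbu : ∀ z : S, bS (M.η.app S z) = z := by
    intro z
    apply Subtype.ext
    show ζ (M.toFunctor.map (TypeCat.ofHom Subtype.val) (M.η.app S z)) = z.1
    have hnat := ConcreteCategory.congr_hom (M.η.naturality (TypeCat.ofHom (Subtype.val : S → I))) z
    simp only [Functor.id_map, types_comp_apply] at hnat
    rw [← hnat, hζu]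
    rfl
  have hbm : ∀ z, bS (M.μ.app S z) = bS (M.toFunctor.map (TypeCat.ofHom bS) z) := by
    intro z
    apply Subtype.ext
    show ζ (M.toFunctor.map (TypeCat.ofHom Subtype.val) (M.μ.app S z))
      = ζ (M.toFunctor.map (TypeCat.ofHom Subtype.val) (M.toFunctor.map (TypeCat.ofHom bS) z))
    have hnat := ConcreteCategory.congr_hom (M.μ.naturality (TypeCat.ofHom (Subtype.val : S → I))) z
    simp only [Functor.comp_map, types_comp_apply] at hnat
    rw [← hnat, hζm, mapmap, ← Functor.map_comp_apply]
    rfl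
  -- the cocone with values in `S`
  let g : ∀ n : ℕ, TObj H n → S := fun n x => ⟨i n x, memi n x⟩
  have hg1 : ∀ (n : ℕ) (z : M.toFunctor.obj (TObj H n)),
      g n (aStr l n z) = bS (M.toFunctor.map (TypeCat.ofHom (g n)) z) := by
    intro n z
    apply Subtype.ext
    show i n (aStr l n z) = ζ (M.toFunctor.map (TypeCat.ofHom Subtype.val) (M.toFunctor.map (TypeCat.ofHom (g n)) z))
    rw [hialg, mapmap]
  have hg2 : ∀ (n : ℕ) (x : TObj H n), g (n + 1) (Emb H e n x) = g n x := by
    intro n x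
    apply Subtype.ext
    exact hicoc n x
  obtain ⟨h, ⟨hh1, hh2⟩, _⟩ := hcolim S bS hbu hbm g hg1 hg2
  obtain ⟨h', _, huniq'⟩ := hcolim I ζ hζu hζm i hialg hicoc
  have e1 : (fun a => (h a).1) = h' := by
    apply huniq'
    constructor
    · intro z
      show (h (ζ z)).1 = ζ (M.toFunctor.map (TypeCat.ofHom (fun a => (h a).1)) z)
      rw [hh1]
      show ζ (M.toFunctor.map (TypeCat.ofHom Subtype.val) (M.toFunctor.map (TypeCat.ofHom h) z)) = _
      rw [mapmap]
    · intro n x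
      show (h (i n x)).1 = i n x
      rw [hh2]
  have e2 : (fun a : I => a) = h' := by
    apply huniq'
    constructor
    · intro z
      show ζ z = ζ (M.toFunctor.map (TypeCat.ofHom (fun a : I => a)) z)
      have : TypeCat.ofHom (fun a : I => a) = 𝟙 I := rfl
      rw [this, M.toFunctor.map_id]
      rfl
    · intro n x
      rfl
  -- joint surjectivity of the `i n`
  have hsurj : ∀ a : I, ∃ (n : ℕ) (x : TObj H n), i n x = a := by
    intro a
    have ha : (h a).1 = a := by
      rw [congrFun e1 a, ← congrFun e2 a]
    obtain ⟨q, hq⟩ := (h a).2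
    obtain ⟨n, y, rfl⟩ := Limits.Types.jointly_surjective' q
    exact ⟨n, y, by rw [← hκ n y, hq, ha]⟩
  -- pushing elements along the chain
  have push : ∀ (n m : ℕ), n ≤ m → ∀ x : TObj H n, ∃ x' : TObj H m, i m x' = i n x := by
    intro n m hnm
    induction m, hnm using Nat.le_induction with
    | base => exact fun x => ⟨x, rfl⟩
    | succ m hm ih =>
        intro x
        obtain ⟨x', hx'⟩ := ih x
        exact ⟨Emb H e m x', by rw [hicoc]; exact hx'⟩
  -- injectivity of `f`
  have key : ∀ (n m : ℕ), n ≤ m → ∀ (x : TObj H n) (y : TObj H m),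
      f (i n x) = f (i m y) → i n x = i m y := by
    intro n m hnm x y hxy
    obtain ⟨x', hx'⟩ := push n m hnm x
    rw [← hx'] at hxy ⊢
    have : x' = y := by rw [← hfi m x', ← hfi m y, hxy]
    rw [this]
  intro a a' haa
  obtain ⟨n, x, rfl⟩ := hsurj a
  obtain ⟨m, y, rfl⟩ := hsurj a'
  rcases le_total n m with hnm | hmn
  · exact key n m hnm x y haa
  · exact (key m n hmn y x haa.symm).symm

end OnCoalgebrasOverAlgebras
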